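/- One has max over w ∈ W_G of ⟨w·δ_G, δ_K⟩ = ⟨δ_G, δ_K⟩ − Σ_{θ∈Λ} ⟨θ, δ_K⟩ (with the convention that the sum is 0 when Λ is empty). -/

import Mathlib

open scoped RealInnerProductSpace

/-- The reflection in the hyperplane orthogonal to `α`. -/
noncomputable def rootReflection {V : Type*} [NormedAddCommGroup V] [InnerProductSpace ℝ V]
    [FiniteDimensional ℝ V] (α : V) : V ≃ₗᵢ[ℝ] V :=
  Submodule.reflection ((ℝ ∙ α)ᗮ)

/-- The Weyl group: the group generated by the reflections in the roots. -/
noncomputable def weylGroup {V : Type*} [NormedAddCommGroup V] [InnerProductSpace ℝ V]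
    [FiniteDimensional ℝ V] (Φ : Finset V) : Subgroup (V ≃ₗᵢ[ℝ] V) :=
  Subgroup.closure { w | ∃ α ∈ Φ, w = rootReflection α }

section Aux

variable {V : Type*} [NormedAddCommGroup V] [InnerProductSpace ℝ V] [FiniteDimensional ℝ V]

lemma rootReflection_apply' (α β : V) :
    rootReflection α β = β - (2 * ⟪α, β⟫ / ⟪α, α⟫) • α := by
  rw [rootReflection, Submodule.reflection_apply, Submodule.starProjection_orthogonal_val,
    Submodule.starProjection_singleton]
  have h : ⟪α, α⟫ = (‖α‖ : ℝ) ^ 2 := real_inner_self_eq_norm_sq α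
  rw [h, mul_div_assoc]
  simp only [RCLike.ofReal_real_eq_id, id_eq]
  module

lemma rootReflection_self' (α : V) : rootReflection α α = -α :=
  Submodule.reflection_orthogonalComplement_singleton_eq_neg α

lemma rootReflection_inv' (α : V) : (rootReflection α)⁻¹ = rootReflection α :=
  Submodule.reflection_symm

end Aux

theorem stmt7 {V : Type*} [NormedAddCommGroup V] [InnerProductSpace ℝ V] [FiniteDimensional ℝ V]
    (Φ : Finset V) (hΦ0 : (0 : V) ∉ Φ)
    (hspan : Submodule.span ℝ (Φ : Set V) = ⊤)
    (hred : ∀ α ∈ Φ, ∀ t : ℝ, t • α ∈ Φ → t = 1 ∨ t = -1)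
    (hrefl : ∀ α ∈ Φ, ∀ β ∈ Φ, rootReflection α β ∈ Φ)
    (ΦGp : Finset V)
    (hΦGp : ∃ f : V →ₗ[ℝ] ℝ, (∀ α ∈ Φ, f α ≠ 0) ∧ ∀ α, α ∈ ΦGp ↔ α ∈ Φ ∧ 0 < f α)
    (δG : V) (hδG : δG = (2⁻¹ : ℝ) • ∑ α ∈ ΦGp, α)
    (ΦK : Finset V) (hΦKsub : ΦK ⊆ Φ)
    (hΦKneg : ∀ α ∈ ΦK, -α ∈ ΦK)
    (hΦKrefl : ∀ α ∈ ΦK, ∀ β ∈ ΦK, rootReflection α β ∈ ΦK)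
    (ΦKp : Finset V) (hΦKp : ∀ α, α ∈ ΦKp ↔ α ∈ ΦK ∧ α ∈ ΦGp)
    (δK : V) (hδK : δK = (2⁻¹ : ℝ) • ∑ α ∈ ΦKp, α)
    (Λ : Finset V) (hΛ : ∀ θ, θ ∈ Λ ↔ θ ∈ ΦGp ∧ ⟪θ, δK⟫ < 0)
    (hinner : ∃ x : V, (∀ θ ∈ Φ, ∃ n : ℤ, ⟪θ, x⟫ = n / 2) ∧
      (∀ θ, θ ∈ ΦK ↔ θ ∈ Φ ∧ ∃ n : ℤ, ⟪θ, x⟫ = (n : ℝ))) :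
    IsGreatest {r : ℝ | ∃ w ∈ weylGroup Φ, r = ⟪w δG, δK⟫}
      (⟪δG, δK⟫ - ∑ θ ∈ Λ, ⟪θ, δK⟫) := by
  classical
  obtain ⟨f, hf0, hfpos⟩ := hΦGp
  set u : V := (InnerProductSpace.toDual ℝ V).symm (LinearMap.toContinuousLinearMap f) with hu_def
  have hu : ∀ x : V, ⟪u, x⟫ = f x := by
    intro x
    rw [hu_def]
    exact InnerProductSpace.toDual_symm_apply
  have hne : ∀ α ∈ Φ, α ≠ 0 := fun α h hh => hΦ0 (hh ▸ h)
  have hΦneg : ∀ α ∈ Φ, -α ∈ Φ := by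
    intro α h
    have := hrefl α h α h
    rwa [rootReflection_self'] at this
  have hGsub : ∀ θ ∈ ΦGp, θ ∈ Φ := fun θ h => ((hfpos θ).mp h).1
  have hsplit : ∀ α ∈ Φ, α ∉ ΦGp → -α ∈ ΦGp := by
    intro α hα hno
    rcases lt_or_gt_of_ne (hf0 α hα) with hlt | hgt
    · exact (hfpos _).mpr ⟨hΦneg α hα, by rw [map_neg]; linarith⟩
    · exact absurd ((hfpos α).mpr ⟨hα, hgt⟩) hno
  have hnotneg : ∀ θ ∈ ΦGp, -θ ∉ ΦGp := by
    intro θ hθ hcon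
    have h1 := ((hfpos θ).mp hθ).2
    have h2 := ((hfpos (-θ)).mp hcon).2
    rw [map_neg] at h2
    linarith
  -- stability of Φ under the Weyl group
  have hstabp : ∀ w ∈ weylGroup Φ, (∀ α ∈ Φ, w α ∈ Φ) ∧ (∀ α ∈ Φ, w⁻¹ α ∈ Φ) := by
    intro w hw
    have hw' : w ∈ Subgroup.closure {w : V ≃ₗᵢ[ℝ] V | ∃ α ∈ Φ, w = rootReflection α} := hw
    induction hw' using Subgroup.closure_induction with
    | mem x hx =>
      obtain ⟨α, hα, rfl⟩ := hx
      exact ⟨fun β hβ => hrefl α hα β hβ, fun β hβ => by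
        rw [rootReflection_inv']; exact hrefl α hα β hβ⟩
    | one => exact ⟨fun β hβ => hβ, fun β hβ => hβ⟩
    | mul x y hx hy ihx ihy =>
      refine ⟨fun β hβ => (ihx hx).1 _ ((ihy hy).1 β hβ), fun β hβ => ?_⟩
      rw [mul_inv_rev]
      exact (ihy hy).2 _ ((ihx hx).2 β hβ)
    | inv x hx ih =>
      exact ⟨(ih hx).2, fun β hβ => by rw [inv_inv]; exact (ih hx).1 β hβ⟩
  have hstab : ∀ w ∈ weylGroup Φ, ∀ α ∈ Φ, w α ∈ Φ := fun w hw => (hstabp w hw).1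
  -- the key rearrangement identity
  have key : ∀ w ∈ weylGroup Φ, ∑ θ ∈ ΦGp, |⟪w θ, δK⟫| = ∑ θ ∈ ΦGp, |⟪θ, δK⟫| := by
    intro w hw
    have hwi := (hstabp w hw).1
    have hwinv : ∀ α ∈ Φ, w.symm α ∈ Φ := (hstabp w hw).2
    refine Finset.sum_nbij' (i := fun θ => if w θ ∈ ΦGp then w θ else -(w θ))
      (j := fun θ => if w.symm θ ∈ ΦGp then w.symm θ else -(w.symm θ)) ?_ ?_ ?_ ?_ ?_
    · intro θ hθ
      by_cases h : w θ ∈ ΦGp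
      · rw [if_pos h]; exact h
      · rw [if_neg h]; exact hsplit _ (hwi θ (hGsub θ hθ)) h
    · intro θ hθ
      by_cases h : w.symm θ ∈ ΦGp
      · rw [if_pos h]; exact h
      · rw [if_neg h]; exact hsplit _ (hwinv θ (hGsub θ hθ)) h
    · intro θ hθ
      by_cases h : w θ ∈ ΦGp
      · simp only [if_pos h, LinearIsometryEquiv.symm_apply_apply, if_pos hθ]
      · rw [if_neg h, map_neg, LinearIsometryEquiv.symm_apply_apply,
          if_neg (hnotneg θ hθ), neg_neg]
    · intro θ hθ
      by_cases h : w.symm θ ∈ ΦGp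
      · simp only [if_pos h, LinearIsometryEquiv.apply_symm_apply, if_pos hθ]
      · rw [if_neg h, map_neg, LinearIsometryEquiv.apply_symm_apply,
          if_neg (hnotneg θ hθ), neg_neg]
    · intro θ hθ
      by_cases h : w θ ∈ ΦGp
      · simp [h]
      · simp [h, inner_neg_left]
  -- expansion of the inner product with δG
  have expand : ∀ w : V ≃ₗᵢ[ℝ] V, ⟪w δG, δK⟫ = 2⁻¹ * ∑ θ ∈ ΦGp, ⟪w θ, δK⟫ := by
    intro w
    rw [hδG, map_smul, map_sum, real_inner_smul_left, sum_inner]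
  -- the right-hand side equals half the sum of absolute values
  have hΛeq : Λ = ΦGp.filter (fun θ => ⟪θ, δK⟫ < 0) := by
    ext θ
    rw [hΛ θ, Finset.mem_filter]
  have hRHS : ⟪δG, δK⟫ - ∑ θ ∈ Λ, ⟪θ, δK⟫ = 2⁻¹ * ∑ θ ∈ ΦGp, |⟪θ, δK⟫| := by
    have h1 : ⟪δG, δK⟫ = 2⁻¹ * ∑ θ ∈ ΦGp, ⟪θ, δK⟫ := by
      rw [hδG, real_inner_smul_left, sum_inner]
    rw [h1, hΛeq, Finset.sum_filter, Finset.mul_sum, Finset.mul_sum, ← Finset.sum_sub_distrib]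
    refine Finset.sum_congr rfl fun θ _ => ?_
    rcases lt_or_ge ⟪θ, δK⟫ 0 with h | h
    · rw [if_pos h, abs_of_neg h]; ring
    · rw [if_neg (not_lt.mpr h), abs_of_nonneg h]; ring
  -- finiteness of the Weyl group
  haveI : Finite (weylGroup Φ) := by
    have hF : Function.Injective (fun (w : weylGroup Φ) (α : {x // x ∈ Φ}) =>
        (⟨(w : V ≃ₗᵢ[ℝ] V) α, hstab w w.2 α α.2⟩ : {x // x ∈ Φ})) := by
      intro w₁ w₂ h
      have h' : Set.EqOn ((w₁ : V ≃ₗᵢ[ℝ] V).toLinearEquiv.toLinearMap)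
          ((w₂ : V ≃ₗᵢ[ℝ] V).toLinearEquiv.toLinearMap) (Φ : Set V) := by
        intro α hα
        exact congrArg Subtype.val (congrFun h ⟨α, hα⟩)
      have hlin := LinearMap.ext_on hspan h'
      apply Subtype.ext
      apply LinearIsometryEquiv.ext
      intro x
      exact LinearMap.congr_fun hlin x
    exact Finite.of_injective _ hF
  haveI : Nonempty (weylGroup Φ) := ⟨1⟩
  obtain ⟨w₀, hw₀⟩ := Finite.exists_max (fun w : weylGroup Φ => ⟪(w : V ≃ₗᵢ[ℝ] V) δK, u⟫)
  set W₀ : V ≃ₗᵢ[ℝ] V := (w₀ : V ≃ₗᵢ[ℝ] V) with hW₀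
  -- dominance of W₀ δK
  have hdom : ∀ θ ∈ ΦGp, 0 ≤ ⟪θ, W₀ δK⟫ := by
    by_contra hcon
    push_neg at hcon
    obtain ⟨θ, hθ, hneg⟩ := hcon
    have hθΦ : θ ∈ Φ := hGsub θ hθ
    have hθ0 : θ ≠ 0 := hne θ hθΦ
    have hsW : rootReflection θ ∈ weylGroup Φ := Subgroup.subset_closure ⟨θ, hθΦ, rfl⟩
    have hmax := hw₀ (⟨rootReflection θ, hsW⟩ * w₀)
    have happ : ((⟨rootReflection θ, hsW⟩ * w₀ : weylGroup Φ) : V ≃ₗᵢ[ℝ] V) δK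
        = rootReflection θ (W₀ δK) := rfl
    rw [happ, rootReflection_apply', inner_sub_left, real_inner_smul_left] at hmax
    have hts : (0:ℝ) < ⟪θ, θ⟫ := by
      rw [real_inner_self_eq_norm_sq]
      have : ‖θ‖ ≠ 0 := norm_ne_zero_iff.mpr hθ0
      positivity
    have hfθ : 0 < f θ := ((hfpos θ).mp hθ).2
    have hθu : (0:ℝ) < ⟪θ, u⟫ := by rw [real_inner_comm, hu]; exact hfθ
    have hc : 2 * ⟪θ, W₀ δK⟫ / ⟪θ, θ⟫ < 0 :=
      div_neg_of_neg_of_pos (by linarith) hts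
    nlinarith [mul_neg_of_neg_of_pos hc hθu]
  constructor
  · -- membership
    have hWinv : W₀⁻¹ ∈ weylGroup Φ := inv_mem w₀.2
    refine ⟨W₀⁻¹, hWinv, ?_⟩
    have e2 : ∀ θ : V, ⟪W₀⁻¹ θ, δK⟫ = ⟪θ, W₀ δK⟫ := by
      intro θ
      calc ⟪W₀⁻¹ θ, δK⟫ = ⟪W₀ (W₀⁻¹ θ), W₀ δK⟫ := (W₀.inner_map_map _ _).symm
        _ = ⟪θ, W₀ δK⟫ := by
              rw [show W₀ (W₀⁻¹ θ) = θ from W₀.apply_symm_apply θ]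
    have e3 : ∑ θ ∈ ΦGp, ⟪W₀⁻¹ θ, δK⟫ = ∑ θ ∈ ΦGp, |⟪W₀⁻¹ θ, δK⟫| :=
      Finset.sum_congr rfl fun θ hθ =>
        (abs_of_nonneg (by rw [e2]; exact hdom θ hθ)).symm
    rw [hRHS, expand W₀⁻¹, e3, key W₀⁻¹ hWinv]
  · -- upper bound
    rintro r ⟨w, hw, rfl⟩
    rw [hRHS, expand w]
    have hle : ∑ θ ∈ ΦGp, ⟪w θ, δK⟫ ≤ ∑ θ ∈ ΦGp, |⟪θ, δK⟫| := by
      calc ∑ θ ∈ ΦGp, ⟪w θ, δK⟫ ≤ ∑ θ ∈ ΦGp, |⟪w θ, δK⟫| :=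
            Finset.sum_le_sum fun θ _ => le_abs_self _
        _ = _ := key w hw
    linarith
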